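/- Let n ≥ 1 and let π be a permutation of {1,…,n} avoiding 123. Define m to be the least index j with 2 ≤ j ≤ n and π(j−1) < π(j) if such an index exists, and m = n+1 otherwise (i.e. if π is decreasing). For 1 ≤ i ≤ n+1, let ins(π, i) be the permutation of {1,…,n+1} obtained from π by inserting the value n+1 at position i (so ins(π,i)(i) = n+1, ins(π,i)(l) = π(l) for l < i and ins(π,i)(l) = π(l−1) for l > i). Then ins(π, i) avoids 123 if and only if i ≤ m. -/
import Mathlib


/-- A permutation `σ` of `{1,…,n}` contains the pattern `τ` (given in one-line
notation as a function `Fin k → ℕ`) if there is a strictly increasing choice of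
indices along which `σ` is order-isomorphic to `τ`. -/
def Contains {n k : ℕ} (σ : Equiv.Perm (Fin n)) (τ : Fin k → ℕ) : Prop :=
  ∃ f : Fin k → Fin n, StrictMono f ∧ ∀ a b : Fin k, σ (f a) < σ (f b) ↔ τ a < τ b

/-- `σ` avoids the pattern `τ`. -/
def Avoids {n k : ℕ} (σ : Equiv.Perm (Fin n)) (τ : Fin k → ℕ) : Prop :=
  ¬ Contains σ τ

def p123 : Fin 3 → ℕ := ![1, 2, 3]
def p132 : Fin 3 → ℕ := ![1, 3, 2]
def p213 : Fin 3 → ℕ := ![2, 1, 3]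
def p1432 : Fin 4 → ℕ := ![1, 4, 3, 2]
def p3214 : Fin 4 → ℕ := ![3, 2, 1, 4]
def p2143 : Fin 4 → ℕ := ![2, 1, 4, 3]

/-- The pattern `q_k = 1 (k+1) k (k-1) ⋯ 2` of length `k+1` (one-line notation,
position `j` is 0-indexed here, values 1-indexed). -/
def qpat (k : ℕ) : Fin (k + 1) → ℕ := fun j => if j.val = 0 then 1 else k + 2 - j.val

/-- The pattern `r_k = k (k-1) ⋯ 2 1 (k+1)` of length `k+1`. -/
def rpat (k : ℕ) : Fin (k + 1) → ℕ := fun j => if j.val = k then k + 1 else k - j.val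

/-- The pattern `s_k = (k-1)(k-2) ⋯ 2 1 (k+1) k` of length `k+1`. -/
def spat (k : ℕ) : Fin (k + 1) → ℕ := fun j =>
  if j.val = k - 1 then k + 1 else if j.val = k then k else k - 1 - j.val

/-- The pattern `u_k = 2 1 (k+1) k (k-1) ⋯ 4 3` of length `k+1`. -/
def upat (k : ℕ) : Fin (k + 1) → ℕ := fun j =>
  if j.val = 0 then 2 else if j.val = 1 then 1 else k + 3 - j.val

lemma smono3' {α : Type*} [Preorder α] (v : Fin 3 → α) (h01 : v 0 < v 1) (h12 : v 1 < v 2) :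
    StrictMono v := by
  intro a b hab
  fin_cases a <;> fin_cases b <;> first
    | exact absurd hab (by decide)
    | exact h01
    | exact h12
    | exact h01.trans h12

lemma pat3 {α : Type*} [Preorder α] (v : Fin 3 → α) (h : StrictMono v) (a b : Fin 3) :
    v a < v b ↔ p123 a < p123 b := by
  fin_cases a <;> fin_cases b <;>
    simp [p123, h.lt_iff_lt, Fin.lt_def]

set_option maxHeartbeats 1000000 in
theorem stmt11 (n : ℕ) (hn : 1 ≤ n) (π : Equiv.Perm (Fin n)) (hπ : Avoids π p123)
    (m : ℕ)
    (hm : (∃ _h2 : 2 ≤ m, ∃ _hmn : m ≤ n,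
            π ⟨m - 2, by omega⟩ < π ⟨m - 1, by omega⟩ ∧
            ∀ j : ℕ, ∀ _hj2 : 2 ≤ j, ∀ _hjm : j < m,
              ¬ π ⟨j - 2, by omega⟩ < π ⟨j - 1, by omega⟩) ∨
          (m = n + 1 ∧ ∀ j : ℕ, ∀ _hj2 : 2 ≤ j, ∀ _hjn : j ≤ n,
              ¬ π ⟨j - 2, by omega⟩ < π ⟨j - 1, by omega⟩))
    (i : Fin (n + 1)) (π' : Equiv.Perm (Fin (n + 1)))
    (hins_i : π' i = Fin.last n)
    (hins_lt : ∀ l : ℕ, ∀ _hl : l < i.val,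
      π' ⟨l, by have := i.isLt; omega⟩ =
        Fin.castSucc (π ⟨l, by have := i.isLt; omega⟩))
    (hins_gt : ∀ l : ℕ, ∀ _hl : i.val < l, ∀ _hln : l ≤ n,
      π' ⟨l, by omega⟩ = Fin.castSucc (π ⟨l - 1, by omega⟩)) :
    Avoids π' p123 ↔ i.val + 1 ≤ m := by
  have hin : i.val ≤ n := Nat.lt_succ_iff.mp i.isLt
  have hm2 : 2 ≤ m := by rcases hm with ⟨h2, _⟩ | ⟨h, _⟩ <;> omega
  have hmn : m ≤ n + 1 := by
    rcases hm with ⟨_, hmn', _⟩ | ⟨h, _⟩ <;> omega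
  -- adjacent descents before the first ascent
  have hadj : ∀ j : ℕ, ∀ h1 : j + 1 < n, ∀ _hjm : j + 2 < m, π ⟨j + 1, h1⟩ < π ⟨j, by omega⟩ := by
    intro j h1 hjm
    have hne : π ⟨j + 1, h1⟩ ≠ π ⟨j, by omega⟩ := by
      intro h
      have := π.injective h
      simp [Fin.ext_iff] at this
    rcases hm with ⟨_, _, _, hmin⟩ | ⟨hmeq, hmin⟩
    · have h := hmin (j + 2) (by omega) (by omega)
      exact lt_of_le_of_ne (not_lt.mp h) hne
    · have h := hmin (j + 2) (by omega) (by omega)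
      exact lt_of_le_of_ne (not_lt.mp h) hne
  -- π strictly decreasing on positions 0..m-2
  have hdec : ∀ b : ℕ, ∀ hbn : b < n, ∀ _hbm : b < m - 1, ∀ a : ℕ, ∀ _hab : a < b,
      π ⟨b, hbn⟩ < π ⟨a, by omega⟩ := by
    intro b
    induction b with
    | zero => intro _ _ a hab; exact absurd hab (Nat.not_lt_zero a)
    | succ b ih =>
      intro hbn hbm a hab
      have hstep : π ⟨b + 1, hbn⟩ < π ⟨b, by omega⟩ := hadj b hbn (by omega)
      rcases Nat.lt_succ_iff_lt_or_eq.mp hab with h | h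
      · exact hstep.trans (ih (by omega) (by omega) a h)
      · subst h; exact hstep
  constructor
  · -- avoids → i.val + 1 ≤ m
    intro hav
    by_contra hcon
    push_neg at hcon
    have hmi : m ≤ i.val := by omega
    rcases hm with ⟨h2, hmn', hasc, _⟩ | ⟨hmeq, _⟩
    swap
    · omega
    apply hav
    have e0 : π' ⟨m - 2, by omega⟩ = Fin.castSucc (π ⟨m - 2, by omega⟩) :=
      hins_lt (m - 2) (by omega)
    have e1 : π' ⟨m - 1, by omega⟩ = Fin.castSucc (π ⟨m - 1, by omega⟩) :=
      hins_lt (m - 1) (by omega)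
    refine ⟨![⟨m - 2, by omega⟩, ⟨m - 1, by omega⟩, i], ?_, ?_⟩
    · apply smono3'
      · show (⟨m - 2, by omega⟩ : Fin (n + 1)) < ⟨m - 1, by omega⟩
        simp [Fin.lt_def]; omega
      · show (⟨m - 1, by omega⟩ : Fin (n + 1)) < i
        simp [Fin.lt_def]; omega
    · have hv : StrictMono (fun a => π' (![⟨m - 2, by omega⟩, ⟨m - 1, by omega⟩, i] a)) := by
        apply smono3'
        · show π' ⟨m - 2, by omega⟩ < π' ⟨m - 1, by omega⟩
          exact e0.trans_lt ((Fin.castSucc_lt_castSucc_iff.mpr hasc).trans_eq e1.symm)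
        · show π' ⟨m - 1, by omega⟩ < π' i
          exact e1.trans_lt ((Fin.castSucc_lt_last _).trans_eq hins_i.symm)
      exact pat3 _ hv
  · -- i.val + 1 ≤ m → avoids
    intro him
    rintro ⟨f, hf, hpat⟩
    have h01 : π' (f 0) < π' (f 1) := (hpat 0 1).mpr (by decide)
    have h12 : π' (f 1) < π' (f 2) := (hpat 1 2).mpr (by decide)
    have hne0 : f 0 ≠ i := by
      intro h
      have h01' : Fin.last n < π' (f 1) := ((congrArg π' h).trans hins_i).symm.trans_lt h01
      exact absurd h01' (not_lt.mpr (Fin.le_last _))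
    have hne1 : f 1 ≠ i := by
      intro h
      have h12' : Fin.last n < π' (f 2) := ((congrArg π' h).trans hins_i).symm.trans_lt h12
      exact absurd h12' (not_lt.mpr (Fin.le_last _))
    have hf01 : (f 0).val < (f 1).val := hf (by decide)
    have hf12 : (f 1).val < (f 2).val := hf (by decide)
    by_cases h2i : f 2 = i
    · -- f 0 < f 1 < i, ascent before position m-1 : contradiction
      have h1i : (f 1).val < i.val := by rw [← h2i]; exact hf12
      have h0i : (f 0).val < i.val := lt_trans hf01 h1i
      have e0 : π' (f 0) = Fin.castSucc (π ⟨(f 0).val, by omega⟩) := hins_lt (f 0).val h0i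
      have e1 : π' (f 1) = Fin.castSucc (π ⟨(f 1).val, by omega⟩) := hins_lt (f 1).val h1i
      have hcc : Fin.castSucc (π ⟨(f 0).val, by omega⟩) < Fin.castSucc (π ⟨(f 1).val, by omega⟩) :=
        e0.symm.trans_lt (h01.trans_eq e1)
      have h01' := Fin.castSucc_lt_castSucc_iff.mp hcc
      have := hdec (f 1).val (by omega) (by omega) (f 0).val hf01
      exact absurd h01' (asymm this)
    · -- none of the three equals i : pattern descends to π
      have hne : ∀ a : Fin 3, (f a).val ≠ i.val := by
        intro a
        fin_cases a
        · exact fun h => hne0 (Fin.ext h)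
        · exact fun h => hne1 (Fin.ext h)
        · exact fun h => h2i (Fin.ext h)
      set idx : Fin 3 → ℕ := fun a => if (f a).val < i.val then (f a).val else (f a).val - 1
        with hidxdef
      have hidx : ∀ a, idx a < n := by
        intro a
        have h1 := hne a
        have h2 := (f a).isLt
        simp only [hidxdef]
        split <;> omega
      have heq : ∀ a, π' (f a) = Fin.castSucc (π ⟨idx a, hidx a⟩) := by
        intro a
        have h1 := hne a
        have h2 := Nat.lt_succ_iff.mp (f a).isLt
        by_cases h : (f a).val < i.val
        · have e := hins_lt (f a).val h
          have hfin : (⟨idx a, hidx a⟩ : Fin n) = ⟨(f a).val, by omega⟩ := by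
            apply Fin.ext
            simp only [hidxdef]
            exact if_pos h
          rw [hfin]
          exact e
        · have hgt : i.val < (f a).val := by omega
          have e := hins_gt (f a).val hgt h2
          have hfin : (⟨idx a, hidx a⟩ : Fin n) = ⟨(f a).val - 1, by omega⟩ := by
            apply Fin.ext
            simp only [hidxdef]
            exact if_neg h
          rw [hfin]
          exact e
      have hmono : ∀ a b : Fin 3, a < b → idx a < idx b := by
        intro a b hab
        have hab' : (f a).val < (f b).val := hf hab
        have h1 := hne a
        have h2 := hne b
        simp only [hidxdef]
        split <;> split <;> omega
      exact hπ ⟨fun a => ⟨idx a, hidx a⟩,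
        fun a b hab => Fin.mk_lt_mk.mpr (hmono a b hab),
        fun a b => by
          refine Iff.trans ?_ (hpat a b)
          rw [heq a, heq b]
          exact Fin.castSucc_lt_castSucc_iff⟩
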